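/- Let g be a Littlewood polynomial of degree t−1 whose coefficients are periodic with period p (i.e. g_j = g_k whenever j ≡ k mod p). If t/p > 3/2, then ||g||₄⁴/||g||₂⁴ ≥ 1 + 2(1 − p/t)² > 11/9. -/

import Mathlib

open Complex intervalIntegral Real Finset

lemma orth (n : ℤ) : (∫ θ in (0:ℝ)..(2*Real.pi), Complex.exp (n * θ * Complex.I))
    = if n = 0 then (2*Real.pi : ℂ) else 0 := by
  split_ifs with h
  · subst h; simp
  · have hc : (n : ℂ) * Complex.I ≠ 0 := by
      simp [Complex.I_ne_zero, h]
    have := integral_exp_mul_complex (a := 0) (b := 2*Real.pi) hc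
    rw [show (fun θ : ℝ => Complex.exp (n * θ * Complex.I)) = fun θ : ℝ => Complex.exp ((n * Complex.I) * θ) from funext fun θ => by ring_nf] at *
    rw [this]
    have h1 : ((n:ℂ) * Complex.I) * (2*Real.pi : ℝ) = n * (2 * Real.pi * Complex.I) := by
      push_cast; ring
    rw [h1, Complex.exp_int_mul_two_pi_mul_I]
    simp

lemma expcont (n : ℤ) : Continuous (fun θ : ℝ => Complex.exp (n * θ * Complex.I)) := by
  fun_prop

lemma sum_exp_integral (t : ℕ) (a : ℕ → ℂ) (m : ℤ) :
    (∫ θ in (0:ℝ)..(2*Real.pi), ∑ j ∈ Finset.range t, ∑ k ∈ Finset.range t,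
      a j * a k * Complex.exp ((((j:ℤ) - k + m : ℤ)) * θ * Complex.I))
    = 2*Real.pi * ∑ j ∈ Finset.range t, ∑ k ∈ Finset.range t,
      (if (j:ℤ) - k + m = 0 then a j * a k else 0) := by
  rw [intervalIntegral.integral_finset_sum (fun j _ => ?_)]
  · rw [Finset.mul_sum]
    refine Finset.sum_congr rfl (fun j _ => ?_)
    rw [intervalIntegral.integral_finset_sum (fun k _ => ?_)]
    · rw [Finset.mul_sum]
      refine Finset.sum_congr rfl (fun k _ => ?_)
      rw [intervalIntegral.integral_const_mul, orth]
      split_ifs <;> ring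
    · exact (continuous_const.mul (expcont _)).intervalIntegrable _ _
  · apply Continuous.intervalIntegrable
    exact continuous_finset_sum _ (fun k _ => continuous_const.mul (expcont _))

open Complex intervalIntegral Real Finset

lemma prod_expand (t : ℕ) (a : ℕ → ℂ) (ha : ∀ j < t, (starRingEnd ℂ) (a j) = a j)
    (θ : ℝ) (m : ℤ) :
    (∑ j ∈ Finset.range t, a j * Complex.exp (j * θ * Complex.I)) *
      (starRingEnd ℂ) (∑ k ∈ Finset.range t, a k * Complex.exp (k * θ * Complex.I)) *
      Complex.exp (m * θ * Complex.I)
    = ∑ j ∈ Finset.range t, ∑ k ∈ Finset.range t,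
        a j * a k * Complex.exp ((((j:ℤ) - k + m : ℤ)) * θ * Complex.I) := by
  rw [map_sum, Finset.sum_mul_sum, Finset.sum_mul]
  refine Finset.sum_congr rfl (fun j hj => ?_)
  rw [Finset.sum_mul]
  refine Finset.sum_congr rfl (fun k hk => ?_)
  have hconj : (starRingEnd ℂ) (a k * Complex.exp (k * θ * Complex.I))
      = a k * Complex.exp ((k:ℂ) * θ * (-Complex.I)) := by
    rw [map_mul, ha k (Finset.mem_range.mp hk), ← Complex.exp_conj]
    simp [Complex.conj_ofReal]
  rw [hconj]
  have hexp : Complex.exp ((((j:ℤ) - k + m : ℤ) : ℂ) * θ * Complex.I)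
      = Complex.exp (j*θ*Complex.I) * Complex.exp ((k:ℂ)*θ*(-Complex.I))
        * Complex.exp ((m:ℂ)*θ*Complex.I) := by
    rw [← Complex.exp_add, ← Complex.exp_add]
    congr 1
    push_cast
    ring
  rw [hexp]
  ring


theorem long_littlewood_ratio_bound (p t : ℕ) (hp : 0 < p) (ht : 0 < t)
    (g : Polynomial ℂ)
    (hcoeff : ∀ j < t, g.coeff j = 1 ∨ g.coeff j = -1)
    (hdeg : ∀ j, t ≤ j → g.coeff j = 0)
    (hper : ∀ j k, j < t → k < t → j % p = k % p → g.coeff j = g.coeff k)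
    (hratio : (t : ℝ) / p > 3 / 2) :
    ((1 / (2 * Real.pi)) *
        ∫ θ in (0:ℝ)..(2 * Real.pi), ‖g.eval (Complex.exp (θ * Complex.I))‖ ^ 4)
        / (t : ℝ) ^ 2
      ≥ 1 + 2 * (1 - (p : ℝ) / t) ^ 2 ∧
    1 + 2 * (1 - (p : ℝ) / t) ^ 2 > 11 / 9 := by
  have hπ : (0:ℝ) < Real.pi := Real.pi_pos
  -- p < t
  have hptR : (p:ℝ) < t := by
    have hp' : (0:ℝ) < p := by exact_mod_cast hp
    rw [gt_iff_lt, lt_div_iff₀ hp'] at hratio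
    nlinarith
  have hpt : p < t := by exact_mod_cast hptR
  set a : ℕ → ℂ := fun j => g.coeff j with ha
  have haa : ∀ j k, j < t → k < t → j % p = k % p → a j * a k = 1 := by
    intro j k hj hk hjk
    have h1 := hper j k hj hk hjk
    rcases hcoeff k hk with h | h <;> simp [ha, h1, h]
  have hconjA : ∀ j < t, (starRingEnd ℂ) (a j) = a j := by
    intro j hj
    rcases hcoeff j hj with h | h <;> simp [ha, h]
  set f : ℝ → ℂ := fun θ => ∑ j ∈ Finset.range t, a j * Complex.exp (j * θ * Complex.I) with hf
  -- eval = f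
  have hg0 : g ≠ 0 := by
    intro h
    rcases hcoeff 0 ht with h0 | h0 <;> simp [h] at h0 <;> norm_num at h0
  have hnd : g.natDegree < t := by
    by_contra hnd
    exact Polynomial.leadingCoeff_ne_zero.mpr hg0 (hdeg _ (le_of_not_gt hnd))
  have hfg : ∀ θ : ℝ, g.eval (Complex.exp (θ * Complex.I)) = f θ := by
    intro θ
    rw [Polynomial.eval_eq_sum_range' hnd, hf]
    refine Finset.sum_congr rfl (fun j _ => ?_)
    rw [← Complex.exp_nat_mul]
    ring_nf
    exact mul_comm _ _
  set Q : ℝ → ℝ := fun θ => Complex.normSq (f θ) with hQ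
  have hPQ : ∀ θ : ℝ, ((Q θ : ℝ) : ℂ) = f θ * (starRingEnd ℂ) (f θ) :=
    fun θ => (Complex.mul_conj (f θ)).symm
  -- continuity
  have hfcont : Continuous f := by
    apply continuous_finset_sum
    intro j _
    exact continuous_const.mul (expcont j)
  have hQcont : Continuous Q := Complex.continuous_normSq.comp hfcont
  -- the key complex integrals
  have hJ : ∀ m : ℤ, (∫ θ in (0:ℝ)..(2*Real.pi), ((Q θ : ℝ):ℂ) * Complex.exp (m * θ * Complex.I))
      = 2*Real.pi * ∑ j ∈ Finset.range t, ∑ k ∈ Finset.range t,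
          (if (j:ℤ) - k + m = 0 then a j * a k else 0) := by
    intro m
    have hfun : (fun θ : ℝ => ((Q θ : ℝ):ℂ) * Complex.exp (m * θ * Complex.I))
        = fun θ : ℝ => ∑ j ∈ Finset.range t, ∑ k ∈ Finset.range t,
            a j * a k * Complex.exp ((((j:ℤ) - k + m : ℤ)) * θ * Complex.I) := by
      funext θ
      rw [hPQ θ, ← prod_expand t a hconjA θ m]
    rw [hfun, sum_exp_integral]
  -- counting
  have hC0 : (∑ j ∈ Finset.range t, ∑ k ∈ Finset.range t,
      (if (j:ℤ) - k + (0:ℤ) = 0 then a j * a k else 0)) = (t:ℂ) := by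
    have inner : ∀ j ∈ Finset.range t, (∑ k ∈ Finset.range t,
        if (j:ℤ) - k + (0:ℤ) = 0 then a j * a k else 0) = 1 := by
      intro j hj
      rw [Finset.sum_eq_single j]
      · rw [if_pos (by ring)]
        exact haa j j (Finset.mem_range.mp hj) (Finset.mem_range.mp hj) rfl
      · intro k _ hkj
        rw [if_neg]
        intro hc
        exact hkj (by omega)
      · intro h; exact absurd hj h
    rw [Finset.sum_congr rfl inner]
    simp
  have hCp : (∑ j ∈ Finset.range t, ∑ k ∈ Finset.range t,
      (if (j:ℤ) - k + (p:ℤ) = 0 then a j * a k else 0)) = (t:ℂ) - p := by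
    have inner : ∀ j ∈ Finset.range t, (∑ k ∈ Finset.range t,
        if (j:ℤ) - k + (p:ℤ) = 0 then a j * a k else 0)
        = if j + p < t then (1:ℂ) else 0 := by
      intro j hj
      by_cases hjp : j + p < t
      · rw [Finset.sum_eq_single (j+p)]
        · rw [if_pos (by push_cast; ring), if_pos hjp]
          exact haa j (j+p) (Finset.mem_range.mp hj) hjp (Nat.add_mod_right j p).symm
        · intro k _ hkj
          rw [if_neg]
          intro hc
          exact hkj (by omega)
        · intro h; exact absurd (Finset.mem_range.mpr hjp) h
      · rw [if_neg hjp]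
        apply Finset.sum_eq_zero
        intro k hk
        rw [if_neg]
        intro hc
        have : k = j + p := by omega
        exact hjp (this ▸ Finset.mem_range.mp hk)
    rw [Finset.sum_congr rfl inner, Finset.sum_boole]
    have : (Finset.range t).filter (fun j => j + p < t) = Finset.range (t - p) := by
      ext j; simp; omega
    rw [this, Finset.card_range]
    push_cast [Nat.cast_sub hpt.le]
    ring
  have hCmp : (∑ j ∈ Finset.range t, ∑ k ∈ Finset.range t,
      (if (j:ℤ) - k + (-(p:ℤ)) = 0 then a j * a k else 0)) = (t:ℂ) - p := by
    rw [Finset.sum_comm]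
    have inner : ∀ k ∈ Finset.range t, (∑ j ∈ Finset.range t,
        if (j:ℤ) - k + (-(p:ℤ)) = 0 then a j * a k else 0)
        = if k + p < t then (1:ℂ) else 0 := by
      intro k hk
      by_cases hkp : k + p < t
      · rw [Finset.sum_eq_single (k+p)]
        · rw [if_pos (by push_cast; ring), if_pos hkp]
          exact haa (k+p) k hkp (Finset.mem_range.mp hk) (Nat.add_mod_right k p)
        · intro j _ hjk
          rw [if_neg]
          intro hc
          exact hjk (by omega)
        · intro h; exact absurd (Finset.mem_range.mpr hkp) h
      · rw [if_neg hkp]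
        apply Finset.sum_eq_zero
        intro j hj
        rw [if_neg]
        intro hc
        have : j = k + p := by omega
        exact hkp (this ▸ Finset.mem_range.mp hj)
    rw [Finset.sum_congr rfl inner, Finset.sum_boole]
    have : (Finset.range t).filter (fun k => k + p < t) = Finset.range (t - p) := by
      ext k; simp; omega
    rw [this, Finset.card_range]
    push_cast [Nat.cast_sub hpt.le]
    ring
  -- the trig comparison function
  set c : ℝ → ℝ := fun θ => t + 2*((t:ℝ)-p)*Real.cos (p*θ) with hc
  have hccont : Continuous c := by fun_prop
  have hcC : ∀ θ : ℝ, ((c θ : ℝ):ℂ)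
      = (t:ℂ) + ((t:ℂ)-p) * Complex.exp (((p:ℤ)) * θ * Complex.I)
          + ((t:ℂ)-p) * Complex.exp (((-(p:ℤ) : ℤ)) * θ * Complex.I) := by
    intro θ
    have h1 : (((p:ℤ)):ℂ) * θ * Complex.I = ((p*θ:ℝ):ℂ) * Complex.I := by push_cast; ring
    have h2 : (((-(p:ℤ) : ℤ)):ℂ) * θ * Complex.I = ((-(p*θ):ℝ):ℂ) * Complex.I := by push_cast; ring
    rw [h1, h2, Complex.exp_mul_I, Complex.exp_mul_I]
    push_cast [hc]
    simp [Complex.cos_neg, Complex.sin_neg, ← Complex.ofReal_cos, ← Complex.ofReal_sin]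
    ring

  set At : ℝ := (t:ℝ)^2 + 2*((t:ℝ)-(p:ℝ))^2 with hAt
  set u : ℂ := (t:ℂ) - (p:ℂ) with hu
  have hQE : ∀ m : ℤ, IntervalIntegrable
      (fun θ : ℝ => ((Q θ : ℝ):ℂ) * Complex.exp (m*θ*Complex.I))
      MeasureTheory.volume 0 (2*Real.pi) :=
    fun m => ((Complex.continuous_ofReal.comp hQcont).mul (expcont m)).intervalIntegrable _ _
  -- ∫ Q·c
  have hQc : (∫ θ in (0:ℝ)..(2*Real.pi), Q θ * c θ) = 2*Real.pi * At := by
    have key : ((∫ θ in (0:ℝ)..(2*Real.pi), Q θ * c θ : ℝ) : ℂ) = ((2*Real.pi * At : ℝ) : ℂ) := by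
      rw [← intervalIntegral.integral_ofReal]
      calc (∫ θ in (0:ℝ)..(2*Real.pi), ((Q θ * c θ : ℝ):ℂ))
          = ∫ θ in (0:ℝ)..(2*Real.pi),
              ((t:ℂ) * (((Q θ:ℝ):ℂ) * Complex.exp (((0:ℤ)) * θ * Complex.I))
              + u * (((Q θ:ℝ):ℂ) * Complex.exp (((p:ℤ)) * θ * Complex.I))
              + u * (((Q θ:ℝ):ℂ) * Complex.exp (((-(p:ℤ) : ℤ)) * θ * Complex.I))) := by
            refine intervalIntegral.integral_congr (fun θ _ => ?_)
            rw [Complex.ofReal_mul, hcC θ]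
            simp only [Int.cast_zero, zero_mul, Complex.exp_zero, mul_one, Int.cast_neg,
              Int.cast_natCast]
            ring
        _ = (t:ℂ) * (∫ θ in (0:ℝ)..(2*Real.pi), ((Q θ:ℝ):ℂ) * Complex.exp (((0:ℤ)) * θ * Complex.I))
              + u * (∫ θ in (0:ℝ)..(2*Real.pi), ((Q θ:ℝ):ℂ) * Complex.exp (((p:ℤ)) * θ * Complex.I))
              + u * (∫ θ in (0:ℝ)..(2*Real.pi), ((Q θ:ℝ):ℂ) * Complex.exp (((-(p:ℤ) : ℤ)) * θ * Complex.I)) := by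
            rw [intervalIntegral.integral_add (((hQE 0).const_mul _).add ((hQE p).const_mul _))
                ((hQE (-(p:ℤ))).const_mul _),
              intervalIntegral.integral_add ((hQE 0).const_mul _) ((hQE p).const_mul _),
              intervalIntegral.integral_const_mul, intervalIntegral.integral_const_mul,
              intervalIntegral.integral_const_mul]
        _ = ((2*Real.pi * At : ℝ) : ℂ) := by
            rw [hJ 0, hJ (p:ℤ), hJ (-(p:ℤ)), hC0, hCp, hCmp]
            push_cast [hAt, hu]
            ring
    exact_mod_cast key
  -- ∫ c²
  have hpz : ((p:ℤ)) ≠ 0 := by exact_mod_cast hp.ne'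
  have h2pz : ((2*p:ℤ)) ≠ 0 := by omega
  have hcc : (∫ θ in (0:ℝ)..(2*Real.pi), c θ ^ 2) = 2*Real.pi * At := by
    have key : ((∫ θ in (0:ℝ)..(2*Real.pi), c θ ^ 2 : ℝ) : ℂ) = ((2*Real.pi * At : ℝ) : ℂ) := by
      rw [← intervalIntegral.integral_ofReal]
      calc (∫ θ in (0:ℝ)..(2*Real.pi), ((c θ ^ 2 : ℝ):ℂ))
          = ∫ θ in (0:ℝ)..(2*Real.pi),
              (((t:ℂ)^2 + 2*u^2) * Complex.exp (((0:ℤ)) * θ * Complex.I)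
              + 2*(t:ℂ)*u * Complex.exp (((p:ℤ)) * θ * Complex.I)
              + 2*(t:ℂ)*u * Complex.exp (((-(p:ℤ) : ℤ)) * θ * Complex.I)
              + u^2 * Complex.exp (((2*p:ℤ)) * θ * Complex.I)
              + u^2 * Complex.exp (((-(2*p:ℤ) : ℤ)) * θ * Complex.I)) := by
            refine intervalIntegral.integral_congr (fun θ _ => ?_)
            rw [Complex.ofReal_pow, hcC θ]
            have h1 : Complex.exp (((p:ℤ)) * θ * Complex.I) * Complex.exp (((p:ℤ)) * θ * Complex.I)
                = Complex.exp (((2*p:ℤ)) * θ * Complex.I) := by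
              rw [← Complex.exp_add]; congr 1; push_cast; ring
            have h2 : Complex.exp (((-(p:ℤ) : ℤ)) * θ * Complex.I) * Complex.exp (((-(p:ℤ) : ℤ)) * θ * Complex.I)
                = Complex.exp (((-(2*p:ℤ) : ℤ)) * θ * Complex.I) := by
              rw [← Complex.exp_add]; congr 1; push_cast; ring
            have h3 : Complex.exp (((p:ℤ)) * θ * Complex.I) * Complex.exp (((-(p:ℤ) : ℤ)) * θ * Complex.I)
                = 1 := by
              rw [← Complex.exp_add, show ((p:ℤ):ℂ) * θ * Complex.I + (((-(p:ℤ) : ℤ)):ℂ) * θ * Complex.I = 0 by push_cast; ring,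
                Complex.exp_zero]
            simp only [Int.cast_zero, zero_mul, Complex.exp_zero, mul_one]
            linear_combination u^2 * h1 + u^2 * h2 + 2*u^2 * h3
        _ = ((2*Real.pi * At : ℝ) : ℂ) := by
            have iexp : ∀ m : ℤ, IntervalIntegrable
                (fun θ : ℝ => Complex.exp (m*θ*Complex.I)) MeasureTheory.volume 0 (2*Real.pi) :=
              fun m => (expcont m).intervalIntegrable _ _
            rw [intervalIntegral.integral_add (IntervalIntegrable.add (IntervalIntegrable.add
                  (((iexp 0).const_mul _).add ((iexp (p:ℤ)).const_mul _)) ((iexp (-(p:ℤ))).const_mul _))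
                  ((iexp ((2*p:ℤ))).const_mul _)) ((iexp (-(2*p:ℤ))).const_mul _),
              intervalIntegral.integral_add (IntervalIntegrable.add
                  (((iexp 0).const_mul _).add ((iexp (p:ℤ)).const_mul _)) ((iexp (-(p:ℤ))).const_mul _))
                  ((iexp ((2*p:ℤ))).const_mul _),
              intervalIntegral.integral_add (((iexp 0).const_mul _).add ((iexp (p:ℤ)).const_mul _))
                  ((iexp (-(p:ℤ))).const_mul _),
              intervalIntegral.integral_add ((iexp 0).const_mul _) ((iexp (p:ℤ)).const_mul _),
              intervalIntegral.integral_const_mul, intervalIntegral.integral_const_mul,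
              intervalIntegral.integral_const_mul, intervalIntegral.integral_const_mul,
              intervalIntegral.integral_const_mul,
              orth 0, orth (p:ℤ), orth (-(p:ℤ)), orth ((2*p:ℤ)), orth (-(2*p:ℤ))]
            simp only [if_pos rfl, if_neg hpz, if_neg (neg_ne_zero.mpr hpz), if_neg h2pz,
              if_neg (neg_ne_zero.mpr h2pz)]
            push_cast [hAt, hu]
            ring
    exact_mod_cast key
  -- Bessel-type bound
  have iQ2 : IntervalIntegrable (fun θ => Q θ^2) MeasureTheory.volume 0 (2*Real.pi) :=
    (hQcont.pow 2).intervalIntegrable _ _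
  have iQc : IntervalIntegrable (fun θ => Q θ * c θ) MeasureTheory.volume 0 (2*Real.pi) :=
    (hQcont.mul hccont).intervalIntegrable _ _
  have ic2 : IntervalIntegrable (fun θ => c θ^2) MeasureTheory.volume 0 (2*Real.pi) :=
    (hccont.pow 2).intervalIntegrable _ _
  have hnon : 0 ≤ ∫ θ in (0:ℝ)..(2*Real.pi), ((Q θ^2 - 2*(Q θ * c θ)) + c θ^2) := by
    apply intervalIntegral.integral_nonneg (by positivity)
    intro θ _
    nlinarith [sq_nonneg (Q θ - c θ)]
  have hsplit : (∫ θ in (0:ℝ)..(2*Real.pi), ((Q θ^2 - 2*(Q θ * c θ)) + c θ^2))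
      = (∫ θ in (0:ℝ)..(2*Real.pi), Q θ^2) - 2*(2*Real.pi * At) + 2*Real.pi * At := by
    rw [intervalIntegral.integral_add (iQ2.sub (iQc.const_mul 2)) ic2,
      intervalIntegral.integral_sub iQ2 (iQc.const_mul 2),
      intervalIntegral.integral_const_mul, hQc, hcc]
  have hQ2 : (∫ θ in (0:ℝ)..(2*Real.pi), Q θ^2) ≥ 2*Real.pi * At := by
    rw [hsplit] at hnon; linarith
  -- rewrite the goal integral
  have hI4 : (∫ θ in (0:ℝ)..(2 * Real.pi), ‖g.eval (Complex.exp (θ * Complex.I))‖ ^ 4)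
      = ∫ θ in (0:ℝ)..(2*Real.pi), Q θ^2 := by
    refine intervalIntegral.integral_congr (fun θ _ => ?_)
    rw [hfg θ]
    have h2 : ‖f θ‖^2 = Q θ := by
      rw [hQ, Complex.sq_norm]
    calc ‖f θ‖^4 = (‖f θ‖^2)^2 := by ring
      _ = Q θ^2 := by rw [h2]
  have htR : (0:ℝ) < t := by exact_mod_cast ht
  have ht0 : (t:ℝ) ≠ 0 := htR.ne'
  constructor
  · rw [hI4]
    have h1 : At ≤ (1 / (2 * Real.pi)) * ∫ θ in (0:ℝ)..(2*Real.pi), Q θ^2 := by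
      rw [ge_iff_le] at hQ2
      calc At = (1 / (2 * Real.pi)) * (2*Real.pi * At) := by field_simp
        _ ≤ _ := by
          apply mul_le_mul_of_nonneg_left hQ2
          positivity
    have hAtt : 1 + 2 * (1 - (p : ℝ) / t) ^ 2 = At / (t:ℝ)^2 := by
      rw [hAt]; field_simp
    rw [ge_iff_le, hAtt]
    exact (div_le_div_iff_of_pos_right (pow_pos htR 2)).mpr h1
  · have h23 : (p:ℝ)/t < 2/3 := by
      rw [div_lt_div_iff₀ htR (by norm_num : (0:ℝ) < 3)]
      have hp' : (0:ℝ) < p := by exact_mod_cast hp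
      rw [gt_iff_lt, lt_div_iff₀ hp'] at hratio
      nlinarith
    nlinarith [sq_nonneg ((p:ℝ)/t - 2/3)]
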